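/- Let ℓ(n) = k₁n + k₂(n)(N−n) with k₁ > 0 constant and suppose k₂(0) ≤ k₁. If there exists M ∈ (0, N) such that ((N−M)/N)(k₁ − k₂(M)) > k₁ − k₂(0), then ℓ(M) < ℓ(0) and ℓ(M) < ℓ(N); hence ℓ attains a minimum over {0, 1, ..., N} at some N* with 0 < N* < N. -/
import Mathlib


/-- `ℓ n = k₁ n + k₂ n (N - n)` on `{0, …, N}` with `k₂ 0 ≤ k₁`.  If some
`M ∈ (0, N)` satisfies `((N - M)/N) (k₁ - k₂ M) > k₁ - k₂ 0`, then `ℓ M < ℓ 0` and `ℓ M < ℓ N`,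
hence `ℓ` attains its minimum over `{0, …, N}` at some `N*` with `0 < N* < N`. -/
theorem ohs_exists_weak
    (N M : ℕ) (k₁ : ℝ) (k₂ : ℕ → ℝ)
    (hk₁ : 0 < k₁) (hM0 : 0 < M) (hMN : M < N)
    (hk₂0 : k₂ 0 ≤ k₁)
    (hfrac : ((N : ℝ) - M) / N * (k₁ - k₂ M) > k₁ - k₂ 0) :
    (k₁ * M + k₂ M * ((N : ℝ) - M) < k₁ * 0 + k₂ 0 * ((N : ℝ) - 0)) ∧
    (k₁ * M + k₂ M * ((N : ℝ) - M) < k₁ * N + k₂ N * ((N : ℝ) - N)) ∧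
    ∃ Nstar : ℕ, 0 < Nstar ∧ Nstar < N ∧
      ∀ i ≤ N, k₁ * Nstar + k₂ Nstar * ((N : ℝ) - Nstar) ≤ k₁ * i + k₂ i * ((N : ℝ) - i) := by
  set ℓ : ℕ → ℝ := fun n => k₁ * n + k₂ n * ((N : ℝ) - n) with hℓ
  have hNpos : (0 : ℝ) < N := by
    exact_mod_cast Nat.pos_of_ne_zero (by omega)
  have hkey : (k₁ - k₂ 0) * N < ((N : ℝ) - M) * (k₁ - k₂ M) := by
    rw [div_mul_eq_mul_div] at hfrac
    exact (lt_div_iff₀ hNpos).mp hfrac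
  have h0 : ℓ M < ℓ 0 := by
    simp only [hℓ, Nat.cast_zero]
    nlinarith
  have hN : ℓ M < ℓ N := by
    have : ℓ 0 ≤ ℓ N := by
      simp only [hℓ, Nat.cast_zero]
      nlinarith
    linarith
  refine ⟨by simpa [hℓ] using h0, by simpa [hℓ] using hN, ?_⟩
  obtain ⟨Nstar, hmem, hmin⟩ := Finset.exists_min_image (Finset.range (N + 1)) ℓ
    ⟨M, Finset.mem_range.mpr (by omega)⟩
  have hminM : ℓ Nstar ≤ ℓ M := hmin M (Finset.mem_range.mpr (by omega))
  have hns0 : Nstar ≠ 0 := by rintro rfl; linarith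
  have hnsN : Nstar ≠ N := by rintro rfl; linarith
  have hle : Nstar < N + 1 := Finset.mem_range.mp hmem
  exact ⟨Nstar, by omega, by omega, fun i hi => hmin i (Finset.mem_range.mpr (by omega))⟩
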